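/- The set of 15 rules for a locomotive going up a vertical track (Table 4 of the paper, rules 47–61) is rotation-consistent. The rules are: (W,WBWWBWBBBW,W), (W,WBWWWBWWWW,W), (W,WWBWBBBWWW,W), (W,WBRWBWBBBW,R), (R,WBWWBWBBBW,W), (W,WBWWWBRWWW,W), (W,RBWWBWBBBW,W), (W,RBWWWBWWWW,W), (W,WBWWBWBWWW,W), (W,RWBWBBBWWW,R), (R,WBRWBWBBBW,R), (R,RBWWBWBBBW,W), (W,RBWWWBRWWW,W), (W,RBWWBWBWWW,W), (B,WRWWWWRWWW,B). -/
import Mathlib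


/-- The three states of the cellular automaton: W (white, quiescent),
B (blue) and R (red). -/
inductive CAState : Type
  | W | B | R
  deriving DecidableEq, Repr

open CAState

/-- A neighbourhood: a word of length 10 over {W,B,R}; positions 0-4
(paper's 1-5) are the side-neighbours, positions 5-9 (paper's 6-10)
the vertex-neighbours. -/
abbrev Nbhd := Fin 10 → CAState

/-- Build a neighbourhood from its ten letters. -/
def nb (a b c d e f g h i j : CAState) : Nbhd := ![a, b, c, d, e, f, g, h, i, j]

/-- The rotation ρ: simultaneous cyclic shift of the side part and of the
vertex part: ρ(x1…x10) = x2x3x4x5x1x7x8x9x10x6. -/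
def rho (n : Nbhd) : Nbhd := fun i => n (![1, 2, 3, 4, 0, 6, 7, 8, 9, 5] i)

/-- Two neighbourhoods are rotation-equivalent if one is ρ^k of the other. -/
def RotEquiv (n m : Nbhd) : Prop := ∃ k : ℕ, n = rho^[k] m

/-- A rule: (current state, neighbourhood, new state). -/
abbrev Rule := CAState × Nbhd × CAState

/-- A set of rules is rotation-consistent if any two rules with the same
current state and rotation-equivalent neighbourhoods have the same new
state. -/
def RotationConsistent (L : List Rule) : Prop :=
  ∀ r₁ ∈ L, ∀ r₂ ∈ L, r₁.1 = r₂.1 → RotEquiv r₁.2.1 r₂.2.1 → r₁.2.2 = r₂.2.2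

lemma rho_five (n : Nbhd) : rho^[5] n = n := by
  funext i
  fin_cases i <;> rfl

lemma rho_mod (k : ℕ) (m : Nbhd) : rho^[k] m = rho^[k % 5] m := by
  induction k using Nat.strong_induction_on with
  | _ k ih =>
    by_cases h : k < 5
    · rw [Nat.mod_eq_of_lt h]
    · have h5 : 5 ≤ k := not_lt.mp h
      have hk : k = k - 5 + 5 := (Nat.sub_add_cancel h5).symm
      rw [hk, Function.iterate_add_apply, rho_five,
        ih (k - 5) (by omega), ← Nat.mod_eq_sub_mod h5]
      congr 1
      omega

lemma rotEquiv_iff (n m : Nbhd) : RotEquiv n m ↔ ∃ k < 5, n = rho^[k] m := by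
  constructor
  · rintro ⟨k, rfl⟩
    exact ⟨k % 5, Nat.mod_lt _ (by norm_num), rho_mod k m⟩
  · rintro ⟨k, _, rfl⟩
    exact ⟨k, rfl⟩

theorem up_track_rules_rotation_consistent :
    RotationConsistent [
    (W, nb W B W W B W B B B W, W),
    (W, nb W B W W W B W W W W, W),
    (W, nb W W B W B B B W W W, W),
    (W, nb W B R W B W B B B W, R),
    (R, nb W B W W B W B B B W, W),
    (W, nb W B W W W B R W W W, W),
    (W, nb R B W W B W B B B W, W),
    (W, nb R B W W W B W W W W, W),
    (W, nb W B W W B W B W W W, W),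
    (W, nb R W B W B B B W W W, R),
    (R, nb W B R W B W B B B W, R),
    (R, nb R B W W B W B B B W, W),
    (W, nb R B W W W B R W W W, W),
    (W, nb R B W W B W B W W W, W),
    (B, nb W R W W W W R W W W, B)] := by
  have hdec : ∀ r₁ ∈ ([
    (W, nb W B W W B W B B B W, W),
    (W, nb W B W W W B W W W W, W),
    (W, nb W W B W B B B W W W, W),
    (W, nb W B R W B W B B B W, R),
    (R, nb W B W W B W B B B W, W),
    (W, nb W B W W W B R W W W, W),
    (W, nb R B W W B W B B B W, W),
    (W, nb R B W W W B W W W W, W),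
    (W, nb W B W W B W B W W W, W),
    (W, nb R W B W B B B W W W, R),
    (R, nb W B R W B W B B B W, R),
    (R, nb R B W W B W B B B W, W),
    (W, nb R B W W W B R W W W, W),
    (W, nb R B W W B W B W W W, W),
    (B, nb W R W W W W R W W W, B)] : List Rule), ∀ r₂ ∈ ([
    (W, nb W B W W B W B B B W, W),
    (W, nb W B W W W B W W W W, W),
    (W, nb W W B W B B B W W W, W),
    (W, nb W B R W B W B B B W, R),
    (R, nb W B W W B W B B B W, W),
    (W, nb W B W W W B R W W W, W),
    (W, nb R B W W B W B B B W, W),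
    (W, nb R B W W W B W W W W, W),
    (W, nb W B W W B W B W W W, W),
    (W, nb R W B W B B B W W W, R),
    (R, nb W B R W B W B B B W, R),
    (R, nb R B W W B W B B B W, W),
    (W, nb R B W W W B R W W W, W),
    (W, nb R B W W B W B W W W, W),
    (B, nb W R W W W W R W W W, B)] : List Rule), r₁.1 = r₂.1 →
      (∃ k < 5, r₁.2.1 = rho^[k] r₂.2.1) → r₁.2.2 = r₂.2.2 := by decide
  intro r₁ h₁ r₂ h₂ hs hrot
  exact hdec r₁ h₁ r₂ h₂ hs ((rotEquiv_iff _ _).mp hrot)
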